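/- arXiv:2310.03071 — 4 statements merged into one kernel-verified Lean document; each statement's English description precedes it below -/
import Mathlib

section
/- For a state with η fermions on n modes (η ∈ ℕ, 0 ≤ η ≤ n), the symmetry value s_4 = (1/2)·C(n,2) − η(n−η) vanishes if and only if n is a perfect square and η = (n ± √n)/2. -/
/-- For a state with `η` fermions on `n` modes, the symmetry value
`s₄(n,η) = (1/2)·C(n,2) − η(n−η)` vanishes iff `n` is a perfect square and
`η = (n ± √n)/2`. -/
theorem stmt0 (n η : ℕ) (hn : 1 ≤ n) (hη : η ≤ n) :
    ((n.choose 2 : ℚ) / 2 - (η : ℚ) * ((n : ℚ) - (η : ℚ)) = 0) ↔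
      ∃ m : ℕ, m * m = n ∧
        ((2 * (η : ℤ) = (n : ℤ) + (m : ℤ)) ∨ (2 * (η : ℤ) = (n : ℤ) - (m : ℤ))) := by
  have hc : (n.choose 2 : ℚ) = n * (n - 1) / 2 := Nat.cast_choose_two ℚ n
  constructor
  · intro h
    rw [hc] at h
    have hq : ((n : ℚ) - 2 * η) ^ 2 = n := by nlinarith [h]
    have hz : ((n : ℤ) - 2 * η) ^ 2 = n := by exact_mod_cast hq
    refine ⟨((n : ℤ) - 2 * η).natAbs, ?_, ?_⟩
    · have h2 : ((((n : ℤ) - 2 * η).natAbs : ℤ)) * (((n : ℤ) - 2 * η).natAbs : ℤ) = n := by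
        rw [Int.natAbs_mul_self']; nlinarith [hz]
      exact_mod_cast h2
    · rcases Int.natAbs_eq ((n : ℤ) - 2 * η) with he | he
      · right; omega
      · left; omega
  · rintro ⟨m, hm, h⟩
    rw [hc]
    have hmz : (m : ℤ) * m = n := by exact_mod_cast hm
    rcases h with he | he
    · have h1 : (2 * η : ℚ) = n + m := by exact_mod_cast he
      have h2 : (m : ℚ) * m = n := by exact_mod_cast hmz
      nlinarith [h1, h2]
    · have h1 : (2 * η : ℚ) = n - m := by exact_mod_cast he
      have h2 : (m : ℚ) * m = n := by exact_mod_cast hmz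
      nlinarith [h1, h2]
end

section
/- If either s_2(n,η) = η − n/2 = 0 or s_4(n,η) = (1/2)·C(n,2) − η(n−η) = 0, then for n > 1 both ancilla-adjusted quantities s'_2(n,η) = η − (n+1)/2 and s'_4(n,η) = (1/2)·C(n+1,2) − η(n+1−η) are nonzero. -/
/-- If `s₂(n,η) = η − n/2 = 0` or `s₄(n,η) = (1/2)·C(n,2) − η(n−η) = 0`, then for
`n > 1` the ancilla-adjusted quantities `s'₂(n,η) = η − (n+1)/2` and
`s'₄(n,η) = (1/2)·C(n+1,2) − η(n+1−η)` are both nonzero. -/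
theorem stmt1 (n η : ℕ) (hn : 1 < n) (hη : η ≤ n)
    (h : ((η : ℚ) - (n : ℚ) / 2 = 0) ∨
         ((n.choose 2 : ℚ) / 2 - (η : ℚ) * ((n : ℚ) - (η : ℚ)) = 0)) :
    ((η : ℚ) - ((n : ℚ) + 1) / 2 ≠ 0) ∧
    (((n + 1).choose 2 : ℚ) / 2 - (η : ℚ) * ((n : ℚ) + 1 - (η : ℚ)) ≠ 0) := by
  have hq : (1:ℚ) < (n:ℚ) := by exact_mod_cast hn
  simp only [Nat.cast_choose_two] at h ⊢
  push_cast at h ⊢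
  by_cases he : (η:ℚ) = (n:ℚ)/2
  · constructor
    · rw [he]; intro hc; linarith
    · rw [he]; intro hc; nlinarith
  · have h2 : (n:ℚ) * ((n:ℚ) - 1) / 2 / 2 - (η:ℚ) * ((n:ℚ) - (η:ℚ)) = 0 := by
      rcases h with h1 | h2
      · exact absurd (by linarith) he
      · exact h2
    constructor
    · intro hc
      have : (n:ℚ) = 1 := by nlinarith
      linarith
    · intro hc
      apply he
      nlinarith
end

section
/- For block-diagonal Q = Q_↑ ⊕ Q_↓ ∈ O(2n_↑) × O(2n_↓), the fermionic Gaussian unitary factorizes as U_Q = U_{Q_↑} ⊗ (P_↓^s U_{Q_↓}), where s = 1 if det(Q_↑) = −1 and s = 0 otherwise, and P_↓ is the parity operator on the spin-down sector; in particular this tensor product correctly implements γ_{μ,↓} ↦ ∑_ν (Q_↓)_{νμ} γ_{ν,↓} where γ_{μ,↓} = P_↑ ⊗ c_{μ,↓}. -/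
open scoped TensorProduct

/-- Spin-adapted factorization of fermionic Gaussian unitaries: for block-diagonal
`Q = Q↑ ⊕ Q↓`, the unitary `U↑ ⊗ (P↓^s U↓)` (with `s = 1` iff `det Q↑ = −1`)
implements the correct Gaussian covariance on both spin sectors; in particular
`γ_{μ,↓} = P↑ ⊗ c_{μ,↓} ↦ ∑_ν (Q↓)_{νμ} γ_{ν,↓}`.

Here the sector data are abstract: `c₁, c₂` are the Majorana operators of the two
sectors, `U₁, U₂` the sector Gaussian unitaries (with two-sided inverses `V₁, V₂`),
`P₁, P₂` the sector parity operators, and `ε = det Q↑ = ±1`, all satisfying the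
standard relations. -/
theorem stmt11
    {A1 A2 : Type*} [Ring A1] [Ring A2] [Algebra ℂ A1] [Algebra ℂ A2]
    {n1 n2 : ℕ}
    (c1 : Fin (2 * n1) → A1) (c2 : Fin (2 * n2) → A2)
    (Q1 : Matrix (Fin (2 * n1)) (Fin (2 * n1)) ℂ)
    (Q2 : Matrix (Fin (2 * n2)) (Fin (2 * n2)) ℂ)
    (U1 V1 P1 : A1) (U2 V2 P2 : A2) (ε : ℂ) (s : ℕ)
    (hdet : (ε = 1 ∧ s = 0) ∨ (ε = -1 ∧ s = 1))
    (hUV1 : U1 * V1 = 1) (hVU1 : V1 * U1 = 1)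
    (hUV2 : U2 * V2 = 1) (hVU2 : V2 * U2 = 1)
    (hcov1 : ∀ μ, U1 * c1 μ * V1 = ∑ ν, Q1 ν μ • c1 ν)
    (hcov2 : ∀ μ, U2 * c2 μ * V2 = ∑ ν, Q2 ν μ • c2 ν)
    (hP1U : P1 * U1 = ε • (U1 * P1))
    (hP1sq : P1 * P1 = 1) (hP2sq : P2 * P2 = 1)
    (hP1c : ∀ μ, P1 * c1 μ = -(c1 μ * P1))
    (hP2c : ∀ μ, P2 * c2 μ = -(c2 μ * P2)) :
    (∀ μ,
      (U1 ⊗ₜ[ℂ] (P2 ^ s * U2)) * (c1 μ ⊗ₜ[ℂ] (1 : A2)) * (V1 ⊗ₜ[ℂ] (V2 * P2 ^ s))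
        = ∑ ν, Q1 ν μ • (c1 ν ⊗ₜ[ℂ] (1 : A2))) ∧
    (∀ μ,
      (U1 ⊗ₜ[ℂ] (P2 ^ s * U2)) * (P1 ⊗ₜ[ℂ] c2 μ) * (V1 ⊗ₜ[ℂ] (V2 * P2 ^ s))
        = ∑ ν, Q2 ν μ • (P1 ⊗ₜ[ℂ] c2 ν)) := by
  have hεε : ε * ε = 1 := by rcases hdet with ⟨rfl, _⟩ | ⟨rfl, _⟩ <;> ring
  have hPP : (P2 ^ s) * (P2 ^ s) = 1 := by
    rcases hdet with ⟨_, rfl⟩ | ⟨_, rfl⟩ <;> simp [hP2sq]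
  have hU1P1 : U1 * P1 * V1 = ε • P1 := by
    have h : ε • (P1 * U1 * V1) = ε • (ε • (U1 * P1 * V1)) := by
      rw [hP1U, smul_mul_assoc]
    rw [smul_smul, hεε, one_smul, mul_assoc, hUV1, mul_one] at h
    exact h.symm
  have hsandwich : ∀ ν, (P2 ^ s) * c2 ν * (P2 ^ s) = ε • c2 ν := by
    intro ν
    rcases hdet with ⟨rfl, rfl⟩ | ⟨rfl, rfl⟩
    · simp
    · simp only [pow_one]
      rw [hP2c ν, neg_mul, mul_assoc, hP2sq, mul_one, neg_smul, one_smul]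
  constructor
  · intro μ
    rw [Algebra.TensorProduct.tmul_mul_tmul, Algebra.TensorProduct.tmul_mul_tmul,
      mul_one]
    have h2 : (P2 ^ s * U2) * (V2 * P2 ^ s) = 1 := by
      rw [mul_assoc, ← mul_assoc U2, hUV2, one_mul, hPP]
    rw [h2, hcov1, TensorProduct.sum_tmul]
    exact Finset.sum_congr rfl fun ν _ => by rw [TensorProduct.smul_tmul']
  · intro μ
    rw [Algebra.TensorProduct.tmul_mul_tmul, Algebra.TensorProduct.tmul_mul_tmul]
    have h2 : (P2 ^ s * U2) * c2 μ * (V2 * P2 ^ s)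
        = (P2 ^ s) * (U2 * c2 μ * V2) * (P2 ^ s) := by
      simp only [mul_assoc]
    rw [h2, hcov2, hU1P1]
    have hmid : (P2 ^ s) * (∑ ν, Q2 ν μ • c2 ν) * (P2 ^ s)
        = ∑ ν, Q2 ν μ • (ε • c2 ν) := by
      rw [Finset.mul_sum, Finset.sum_mul]
      exact Finset.sum_congr rfl fun ν _ => by
        rw [mul_smul_comm, smul_mul_assoc, hsandwich]
    rw [hmid, TensorProduct.tmul_sum]
    refine Finset.sum_congr rfl fun ν _ => ?_
    rw [TensorProduct.tmul_smul, TensorProduct.tmul_smul, TensorProduct.smul_tmul',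
      smul_smul, hεε, one_smul]
end

section
/- Ratio-estimator error bound: let r(x,y) = x/y, and suppose |X̄ − x₀| ≤ ε̃ and |Ȳ − y₀| ≤ ε̃ with y₀ = ξ > 0, ε̃ < ξ, and |x₀/y₀| ≤ B. Then |X̄/Ȳ − x₀/y₀| ≤ (B+1)ε̃/ξ + (1/(ξ−ε̃)²)·((ξB+ε̃)/(ξ−ε̃) + 1)·ε̃². -/
/-- Ratio-estimator error bound: if `|X̄ − x₀| ≤ ε̃`, `|Ȳ − y₀| ≤ ε̃` with
`y₀ = ξ > 0`, `0 < ε̃ < ξ`, and `|x₀| ≤ B·ξ`, then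
`|X̄/Ȳ − x₀/y₀| ≤ (B+1)ε̃/ξ + (1/(ξ−ε̃)²)·((ξB+ε̃)/(ξ−ε̃) + 1)·ε̃²`. -/
theorem stmt14 (Xb Yb x0 y0 ε ξ B : ℝ)
    (hy0 : y0 = ξ) (hξ : 0 < ξ) (hε : 0 < ε) (hεξ : ε < ξ)
    (hB : |x0| ≤ B * ξ)
    (hX : |Xb - x0| ≤ ε) (hY : |Yb - y0| ≤ ε) :
    |Xb / Yb - x0 / y0| ≤
      (B + 1) * ε / ξ + (1 / (ξ - ε) ^ 2) * ((ξ * B + ε) / (ξ - ε) + 1) * ε ^ 2 := by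
  subst hy0
  have hY1 : Yb - y0 ≤ ε := (abs_le.1 hY).2
  have hY2 : -ε ≤ Yb - y0 := (abs_le.1 hY).1
  have hYpos : 0 < Yb := by linarith
  have hξε : 0 < y0 - ε := by linarith
  have hBnn : 0 ≤ B := by
    nlinarith [abs_nonneg x0]
  have key : |Xb / Yb - x0 / y0| ≤ (B + 1) * ε / (y0 - ε) := by
    have heq : Xb / Yb - x0 / y0 = (Xb * y0 - x0 * Yb) / (Yb * y0) := by
      field_simp
    rw [heq, abs_div, abs_of_pos (by positivity : (0:ℝ) < Yb * y0)]
    rw [div_le_div_iff₀ (by positivity) hξε]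
    have hnum : |Xb * y0 - x0 * Yb| ≤ ε * y0 + B * y0 * ε := by
      have : Xb * y0 - x0 * Yb = (Xb - x0) * y0 - x0 * (Yb - y0) := by ring
      rw [this]
      calc |(Xb - x0) * y0 - x0 * (Yb - y0)| ≤ |(Xb - x0) * y0| + |x0 * (Yb - y0)| :=
            abs_sub _ _
        _ ≤ ε * y0 + B * y0 * ε := by
            rw [abs_mul, abs_mul, abs_of_pos hξ]
            have := abs_nonneg (Yb - y0)
            have := abs_nonneg x0
            nlinarith
    have hden : (y0 - ε) * y0 ≤ Yb * y0 := by nlinarith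
    calc |Xb * y0 - x0 * Yb| * (y0 - ε) ≤ (ε * y0 + B * y0 * ε) * (y0 - ε) := by
          nlinarith [abs_nonneg (Xb * y0 - x0 * Yb)]
      _ ≤ (B + 1) * ε * (Yb * y0) := by
          nlinarith [mul_nonneg (mul_nonneg (by linarith : (0:ℝ) ≤ B + 1) hε.le) hξ.le]
  refine key.trans ?_
  -- show (B+1)*ε/(y0-ε) ≤ RHS
  have h1 : (B + 1) * ε / (y0 - ε) ≤
      (B + 1) * ε / y0 + (1 / (y0 - ε) ^ 2) * ((y0 * B + ε) / (y0 - ε) + 1) * ε ^ 2 := by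
    have h2 : (1 / (y0 - ε) ^ 2) * ((y0 * B + ε) / (y0 - ε) + 1) * ε ^ 2
        = ((y0 * B + ε) + (y0 - ε)) * ε ^ 2 / (y0 - ε) ^ 3 := by
      field_simp
    rw [h2, div_add_div _ _ (ne_of_gt hξ) (by positivity),
      div_le_div_iff₀ hξε (by positivity)]
    nlinarith [mul_nonneg (mul_nonneg (mul_nonneg (by linarith : (0:ℝ) ≤ B + 1) hε.le) hξε.le)
      (by nlinarith : (0:ℝ) ≤ y0 ^ 2 - (y0 - ε) ^ 2), mul_pos (mul_pos hξε hξε) hξε]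
  exact h1
end
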